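/- For all integers 0 ≤ l < k, the rank over ℚ of the k×k matrix D_{(k,l)} equals l+1. -/

import Mathlib

open Matrix

/-- The square matrix `D_{(n,l)}`: `-1` on the first `l` diagonal entries, `1` elsewhere. -/
def Dmat (n l : ℕ) : Matrix (Fin n) (Fin n) ℚ :=
  fun i j => if (i : ℕ) = (j : ℕ) ∧ (j : ℕ) < l then -1 else 1

section aux

variable {k : ℕ}

lemma vecMulVec_mul_vecMulVec' (u v u' v' : Fin k → ℚ) :
    vecMulVec u v * vecMulVec u' v' = (v ⬝ᵥ u') • vecMulVec u v' := by
  ext i j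
  simp only [mul_apply, vecMulVec_apply, Matrix.smul_apply, smul_eq_mul, dotProduct, Finset.sum_mul]
  exact Finset.sum_congr rfl (fun m _ => by ring)

lemma isUnit_det_one_add' (u v : Fin k → ℚ) (huv : v ⬝ᵥ u = 0) :
    IsUnit (1 + vecMulVec u v).det := by
  have hA2 : vecMulVec u v * vecMulVec u v = 0 := by
    rw [vecMulVec_mul_vecMulVec', huv, zero_smul]
  have hinv : (1 + vecMulVec u v) * (1 - vecMulVec u v) = 1 := by
    rw [mul_sub, mul_one, add_mul, one_mul, hA2]
    abel
  have hd := congrArg Matrix.det hinv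
  rw [Matrix.det_mul, Matrix.det_one] at hd
  exact IsUnit.of_mul_eq_one _ hd

/-- the vector which is `0` at index `l` and `-1` elsewhere -/
def uvec (k l : ℕ) : Fin k → ℚ := fun i => if (i : ℕ) = l then 0 else -1

/-- the indicator vector of index `l` -/
def evec (k l : ℕ) : Fin k → ℚ := fun i => if (i : ℕ) = l then 1 else 0

end aux

theorem rank_Dmat (k l : ℕ) (h : l < k) : (Dmat k l).rank = l + 1 := by
  classical
  let u := uvec k l
  let e := evec k l
  let A : Matrix (Fin k) (Fin k) ℚ := vecMulVec u e
  let B : Matrix (Fin k) (Fin k) ℚ := vecMulVec e u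
  let w : Fin k → ℚ := fun i => if (i : ℕ) < l then -2 else if (i : ℕ) = l then 1 else 0
  have he_u : e ⬝ᵥ u = 0 := by
    rw [dotProduct, Finset.sum_eq_single (⟨l, h⟩ : Fin k)]
    · simp [u, e, uvec, evec]
    · intro m _ hm
      have : (m : ℕ) ≠ l := fun hc => hm (Fin.ext hc)
      simp [e, evec, this]
    · simp
  have hu_e : u ⬝ᵥ e = 0 := by
    rw [dotProduct, Finset.sum_eq_single (⟨l, h⟩ : Fin k)]
    · simp [u, e, uvec, evec]
    · intro m _ hm
      have : (m : ℕ) ≠ l := fun hc => hm (Fin.ext hc)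
      simp [e, evec, this]
    · simp
  have hPdet : IsUnit (1 + A).det := isUnit_det_one_add' u e he_u
  have hQdet : IsUnit (1 + B).det := isUnit_det_one_add' e u hu_e
  -- the column of D at index l is all ones, same for the row at index l
  have hDrow : ∀ j : Fin k, Dmat k l ⟨l, h⟩ j = 1 := by
    intro j
    simp only [Dmat]
    rw [if_neg]
    omega
  have hDcol : ∀ i : Fin k, Dmat k l i ⟨l, h⟩ = 1 := by
    intro i
    simp only [Dmat]
    rw [if_neg]
    omega
  have hAD : A * Dmat k l = Matrix.of (fun i _ => u i) := by
    ext i j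
    rw [mul_apply, Finset.sum_eq_single (⟨l, h⟩ : Fin k)]
    · simp [A, vecMulVec_apply, e, evec, hDrow j]
    · intro m _ hm
      have : (m : ℕ) ≠ l := fun hc => hm (Fin.ext hc)
      simp [A, vecMulVec_apply, e, evec, this]
    · simp
  have hDB : Dmat k l * B = Matrix.of (fun _ j => u j) := by
    ext i j
    rw [mul_apply, Finset.sum_eq_single (⟨l, h⟩ : Fin k)]
    · simp [B, vecMulVec_apply, e, evec, hDcol i]
    · intro m _ hm
      have : (m : ℕ) ≠ l := fun hc => hm (Fin.ext hc)
      simp [B, vecMulVec_apply, e, evec, this]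
    · simp
  have hADB : Matrix.of (fun i _ => u i) * B = Matrix.of (fun i j => u i * u j) := by
    ext i j
    rw [mul_apply, Finset.sum_eq_single (⟨l, h⟩ : Fin k)]
    · simp [B, vecMulVec_apply, e, evec, u, uvec]
    · intro m _ hm
      have : (m : ℕ) ≠ l := fun hc => hm (Fin.ext hc)
      simp [B, vecMulVec_apply, e, evec, this]
    · simp
  have key : (1 + A) * Dmat k l * (1 + B) = diagonal w := by
    rw [add_mul, one_mul, hAD, add_mul, mul_add, mul_one, mul_add, mul_one, hDB, hADB]
    ext i j
    simp only [Matrix.add_apply, of_apply, Dmat, Matrix.diagonal_apply, Fin.ext_iff, u, uvec, w]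
    split_ifs <;> first | omega | norm_num
  have hrank : (Dmat k l).rank = (diagonal w).rank := by
    rw [← key, rank_mul_eq_left_of_isUnit_det _ _ hQdet,
      rank_mul_eq_right_of_isUnit_det _ _ hPdet]
  rw [hrank, rank_diagonal]
  have hiff : ∀ i : Fin k, w i ≠ 0 ↔ (i : ℕ) < l + 1 := by
    intro i
    simp only [w]
    constructor
    · intro hi
      by_contra hc
      have h1 : ¬ ((i : ℕ) < l) := by omega
      have h2 : ¬ ((i : ℕ) = l) := by omega
      simp [h1, h2] at hi
    · intro hi
      by_cases h1 : (i : ℕ) < l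
      · simp [h1]
      · have h2 : (i : ℕ) = l := by omega
        simp [h1, h2]
  have hcard : Fintype.card {i : Fin k // w i ≠ 0}
      = Fintype.card {i : Fin k // (i : ℕ) < l + 1} :=
    Fintype.card_congr (Equiv.subtypeEquivRight hiff)
  rw [hcard]
  have eqv : {i : Fin k // (i : ℕ) < l + 1} ≃ Fin (l + 1) :=
    { toFun := fun i => ⟨(i.1 : ℕ), i.2⟩
      invFun := fun j => ⟨⟨(j : ℕ), lt_of_lt_of_le j.2 (by omega)⟩, j.2⟩
      left_inv := fun i => by ext; rfl
      right_inv := fun j => rfl }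
  rw [Fintype.card_congr eqv, Fintype.card_fin]
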